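/- Let Φ be irreducible and α a maximal simple root. If Φ is not simply laced and the highest short root θ_s lies in V(α) (i.e. (ω̌_α, θ_s) = m_α) then V(α) is the disjoint union of the W_{Δ∖{α}}-orbits of θ_s and of the highest root θ; otherwise V(α) = W_{Δ∖{α}}·θ. -/

import Mathlib

open scoped RealInnerProductSpace Classical
open Finset

/-- A crystallographic reduced root system in a real inner product space. -/
structure IsRootSystem {E : Type*} [NormedAddCommGroup E] [InnerProductSpace ℝ E]
    (Φ : Set E) : Prop where
  finite : Φ.Finite
  nonempty : Φ.Nonempty
  zero_not_mem : (0 : E) ∉ Φ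
  span_eq_top : Submodule.span ℝ Φ = ⊤
  reflection_mem : ∀ α ∈ Φ, ∀ β ∈ Φ, β - (2 * ⟪α, β⟫ / ⟪α, α⟫) • α ∈ Φ
  crystallographic : ∀ α ∈ Φ, ∀ β ∈ Φ, ∃ n : ℤ, 2 * ⟪α, β⟫ / ⟪α, α⟫ = (n : ℝ)
  reduced : ∀ α ∈ Φ, ∀ t : ℝ, t • α ∈ Φ → t = 1 ∨ t = -1

variable {E : Type*} [NormedAddCommGroup E] [InnerProductSpace ℝ E] [FiniteDimensional ℝ E]

/-- The orthogonal reflection in the hyperplane orthogonal to `α`. -/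
noncomputable def sref (α : E) : E ≃ₗᵢ[ℝ] E := Submodule.reflection (ℝ ∙ α)ᗮ

/-- The group generated by the reflections `s_α`, `α ∈ B`. -/
noncomputable def reflSubgroup (B : Set E) : Subgroup (E ≃ₗᵢ[ℝ] E) :=
  Subgroup.closure {w | ∃ α ∈ B, w = sref α}

/-- The Weyl group of `Φ`. -/
noncomputable def WeylGroup (Φ : Set E) : Subgroup (E ≃ₗᵢ[ℝ] E) := reflSubgroup Φ

/-- Connectivity of a set of nodes, two nodes being adjacent when they are not
orthogonal (this is the Dynkin-diagram adjacency for simple roots). -/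
def IsConnectedSet (S : Set E) : Prop :=
  ∀ x ∈ S, ∀ y ∈ S, Relation.ReflTransGen (fun a b => a ∈ S ∧ b ∈ S ∧ ⟪a, b⟫ ≠ 0) x y

/-- The connected component of `x` in `S` for the non-orthogonality adjacency. -/
def component (S : Set E) (x : E) : Set E :=
  {y ∈ S | Relation.ReflTransGen (fun a b => a ∈ S ∧ b ∈ S ∧ ⟪a, b⟫ ≠ 0) x y}

/-- The orbit of `x` under the subgroup generated by reflections in `B`. -/
noncomputable def reflOrbit (B : Set E) (x : E) : Set E :=
  {y | ∃ w ∈ reflSubgroup B, y = w x}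

section Auxiliary

set_option linter.unusedSectionVars false

lemma inner_self_pos_of_ne_zero {x : E} (hx : x ≠ 0) : 0 < ⟪x, x⟫ := by
  rw [real_inner_self_eq_norm_sq]
  exact pow_pos (norm_pos_iff.mpr hx) 2

lemma sref_apply_aux (a x : E) (ha : a ≠ 0) :
    sref a x = x - (2 * ⟪a, x⟫ / ⟪a, a⟫) • a := by
  have h1 : ⟪a, a⟫ = (‖a‖ : ℝ) ^ 2 := real_inner_self_eq_norm_sq a
  rw [sref, Submodule.reflection_apply, Submodule.starProjection_orthogonal_val,
    Submodule.starProjection_singleton, h1]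
  have h2 : (‖a‖ : ℝ) ^ 2 ≠ 0 := pow_ne_zero 2 (norm_ne_zero_iff.mpr ha)
  simp only [RCLike.ofReal_real_eq_id, id_eq]
  match_scalars <;> field_simp <;> ring

lemma mem_closure_repr (Δ : Finset E) {x : E}
    (hx : x ∈ AddSubmonoid.closure (↑Δ : Set E)) :
    ∃ f : E → ℕ, x = ∑ δ ∈ Δ, (f δ : ℝ) • δ := by
  induction hx using AddSubmonoid.closure_induction with
  | mem y hy =>
    refine ⟨fun e => if e = y then 1 else 0, ?_⟩
    have hy' : y ∈ Δ := by exact_mod_cast hy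
    simp only [Nat.cast_ite, Nat.cast_one, Nat.cast_zero, ite_smul, one_smul, zero_smul,
      Finset.sum_ite_eq', hy', if_pos]
  | zero => exact ⟨0, by simp⟩
  | add x y hx hy ihx ihy =>
    obtain ⟨f, hf⟩ := ihx; obtain ⟨g, hg⟩ := ihy
    refine ⟨f + g, ?_⟩
    rw [hf, hg, ← Finset.sum_add_distrib]
    refine Finset.sum_congr rfl fun e _ => ?_
    push_cast [Pi.add_apply]
    rw [add_smul]

/-- Two-lengths lemma: if `x y` are roots with `⟪x,x⟫ < ⟪y,y⟫` and `⟪x,x⟫ ≤ ⟪x,y⟫`,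
then `⟪y,y⟫` is `2` or `3` times `⟪x,x⟫`. -/
lemma two_lengths {Φ : Set E} (hΦ : IsRootSystem Φ) {x y : E}
    (hx : x ∈ Φ) (hy : y ∈ Φ) (hlt : ⟪x, x⟫ < ⟪y, y⟫) (hin : ⟪x, x⟫ ≤ ⟪x, y⟫) :
    2 * ⟪x, x⟫ ≤ ⟪y, y⟫ ∧ ⟪y, y⟫ ≤ 3 * ⟪x, x⟫ := by
  have hx0 : x ≠ 0 := fun h => hΦ.zero_not_mem (h ▸ hx)
  have hy0 : y ≠ 0 := fun h => hΦ.zero_not_mem (h ▸ hy)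
  have hA : 0 < ⟪x, x⟫ := inner_self_pos_of_ne_zero hx0
  have hB : 0 < ⟪y, y⟫ := inner_self_pos_of_ne_zero hy0
  have hC : 0 < ⟪x, y⟫ := lt_of_lt_of_le hA hin
  obtain ⟨p, hp⟩ := hΦ.crystallographic x hx y hy
  obtain ⟨q, hq⟩ := hΦ.crystallographic y hy x hx
  rw [real_inner_comm x y] at hq
  have hp' : 2 * ⟪x, y⟫ = (p : ℝ) * ⟪x, x⟫ := by
    field_simp at hp; linarith [hp]
  have hq' : 2 * ⟪x, y⟫ = (q : ℝ) * ⟪y, y⟫ := by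
    field_simp at hq; linarith [hq]
  have hp2 : (2 : ℤ) ≤ p := by
    have : (2 : ℝ) ≤ (p : ℝ) := by nlinarith
    exact_mod_cast this
  have hq1 : (1 : ℤ) ≤ q := by
    have h0 : (0 : ℝ) < (q : ℝ) := by nlinarith
    have h0' : (0 : ℤ) < q := by exact_mod_cast h0
    omega
  have hCS : ⟪x, y⟫ * ⟪x, y⟫ ≤ ⟪x, x⟫ * ⟪y, y⟫ := real_inner_mul_inner_self_le x y
  have hprod : ((p : ℝ) * ⟪x, x⟫) * ((q : ℝ) * ⟪y, y⟫) = 4 * (⟪x, y⟫ * ⟪x, y⟫) := by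
    rw [← hp', ← hq']; ring
  have hpq4 : (p : ℝ) * (q : ℝ) ≤ 4 := by nlinarith [mul_pos hA hB]
  have hpq4' : p * q ≤ 4 := by exact_mod_cast hpq4
  have hpgtq : q < p := by
    have : (q : ℝ) < (p : ℝ) := by nlinarith
    exact_mod_cast this
  have hqeq : q = 1 := by nlinarith
  subst hqeq
  have hBpA : ⟪y, y⟫ = (p : ℝ) * ⟪x, x⟫ := by push_cast at hq'; linarith
  have hp4 : p ≤ 4 := by linarith
  have hpne4 : p ≠ 4 := by
    intro hp4'
    subst hp4'
    have hC2A : ⟪x, y⟫ = 2 * ⟪x, x⟫ := by push_cast at hp'; linarith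
    have hd : ⟪y - (2 : ℝ) • x, y - (2 : ℝ) • x⟫ = 0 := by
      rw [real_inner_sub_sub_self]
      rw [real_inner_smul_right, real_inner_smul_left, real_inner_smul_right]
      rw [real_inner_comm x y]
      push_cast at hBpA
      nlinarith
    have hyx : y = (2 : ℝ) • x := by
      have := inner_self_eq_zero (𝕜 := ℝ).mp hd
      rwa [sub_eq_zero] at this
    rcases hΦ.reduced x hx 2 (hyx ▸ hy) with h | h <;> norm_num at h
  have hp3 : p ≤ 3 := by omega
  constructor
  · have : (2 : ℝ) ≤ (p : ℝ) := by exact_mod_cast hp2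
    nlinarith
  · have : (p : ℝ) ≤ 3 := by exact_mod_cast hp3
    nlinarith

end Auxiliary

/-- Let `Φ` be irreducible with base `Δ`, highest (long) root `θ = Σ m_α α`,
fundamental coweights `cw α = ω̌_α`, and let `α` be a maximal simple root.  Let
`Φs` be the set of short roots (those `β` with `(β,β) ≠ (θ,θ)`; empty exactly
when `Φ` is simply laced), `θs` the highest short root whenever `Φs ≠ ∅`, and
`V(α) = {β ∈ Φ | (ω̌_α, β) = m_α}` the set of roots in the coordinate facet
`F(α)`.  If `Φ` is not simply laced and `θs ∈ V(α)` then `V(α)` is the disjoint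
union of the `W_{Δ∖{α}}`-orbits of `θ` and of `θs`; otherwise
`V(α) = W_{Δ∖{α}}·θ`. -/
theorem facet_orbit_decomposition
    (Φ : Finset E) (hΦ : IsRootSystem (↑Φ : Set E))
    (Δ : Finset E) (hΔΦ : (↑Δ : Set E) ⊆ (↑Φ : Set E))
    (hbase : ∀ β ∈ Φ, β ∈ AddSubmonoid.closure (↑Δ : Set E) ∨
      -β ∈ AddSubmonoid.closure (↑Δ : Set E))
    (hind : LinearIndependent ℝ (fun x : (Δ : Set E) => (x : E)))
    (hirr : IsConnectedSet (↑Δ : Set E))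
    (θ : E) (hθ : θ ∈ Φ) (hhigh : ∀ β ∈ Φ, θ - β ∈ AddSubmonoid.closure (↑Δ : Set E))
    (m : E → ℕ) (hm : θ = ∑ α ∈ Δ, (m α : ℝ) • α)
    (cw : E → E) (hcw : ∀ α ∈ Δ, ∀ β ∈ Δ, ⟪cw α, β⟫ = if α = β then 1 else 0)
    (α : E) (hα : α ∈ Δ)
    (hαmax : IsConnectedSet (((↑Δ : Set E) \ {α}) ∪ {-θ}))
    (Φs : Set E) (hΦs : Φs = {β ∈ (↑Φ : Set E) | ⟪β, β⟫ ≠ ⟪θ, θ⟫})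
    (θs : E) (hθs : Φs.Nonempty → θs ∈ Φs ∧
      ∀ β ∈ Φs, θs - β ∈ AddSubmonoid.closure (↑Δ : Set E))
    (V : Set E) (hV : V = {β ∈ (↑Φ : Set E) | ⟪cw α, β⟫ = (m α : ℝ)}) :
    (Φs.Nonempty ∧ ⟪cw α, θs⟫ = (m α : ℝ) →
      V = reflOrbit ((↑Δ : Set E) \ {α}) θ ∪ reflOrbit ((↑Δ : Set E) \ {α}) θs ∧
        Disjoint (reflOrbit ((↑Δ : Set E) \ {α}) θ) (reflOrbit ((↑Δ : Set E) \ {α}) θs)) ∧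
    (¬ (Φs.Nonempty ∧ ⟪cw α, θs⟫ = (m α : ℝ)) →
      V = reflOrbit ((↑Δ : Set E) \ {α}) θ) := by
  classical
  have hmemΦ : ∀ {x : E}, x ∈ Φ → x ∈ (↑Φ : Set E) := fun {x} h => Finset.mem_coe.mpr h
  have hΔΦ' : ∀ {δ : E}, δ ∈ Δ → δ ∈ (↑Φ : Set E) := fun {δ} h => hΔΦ (Finset.mem_coe.mpr h)
  have hne0 : ∀ {x : E}, x ∈ (↑Φ : Set E) → x ≠ 0 := fun {x} hx h0 =>
    hΦ.zero_not_mem (h0 ▸ hx)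
  -- coefficient extraction
  have hcoef : ∀ (g : E → ℝ) (δ : E), δ ∈ Δ → ⟪cw δ, ∑ e ∈ Δ, g e • e⟫ = g δ := by
    intro g δ hδ
    rw [inner_sum]
    have h : ∀ e ∈ Δ, ⟪cw δ, g e • e⟫ = if δ = e then g e else 0 := by
      intro e he
      rw [real_inner_smul_right, hcw δ hδ e he]
      by_cases h : δ = e <;> simp [h]
    rw [Finset.sum_congr rfl h, Finset.sum_ite_eq, if_pos hδ]
  have hccoef : ∀ x ∈ AddSubmonoid.closure (↑Δ : Set E), ∀ δ ∈ Δ, 0 ≤ ⟪cw δ, x⟫ := by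
    intro x hx δ hδ
    obtain ⟨f, hf⟩ := mem_closure_repr Δ hx
    rw [hf, hcoef (fun e => (f e : ℝ)) δ hδ]
    exact Nat.cast_nonneg _
  set ρ : E := ∑ δ ∈ Δ, cw δ with hρdef
  have hρ1 : ∀ δ ∈ Δ, ⟪ρ, δ⟫ = 1 := by
    intro δ hδ
    rw [hρdef, sum_inner]
    have h : ∀ e ∈ Δ, ⟪cw e, δ⟫ = if e = δ then 1 else 0 := fun e he => hcw e he δ hδ
    rw [Finset.sum_congr rfl h, Finset.sum_ite_eq', if_pos hδ]
  have hρnn : ∀ x ∈ AddSubmonoid.closure (↑Δ : Set E), 0 ≤ ⟪ρ, x⟫ := by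
    intro x hx
    obtain ⟨f, hf⟩ := mem_closure_repr Δ hx
    rw [hf, inner_sum]
    refine Finset.sum_nonneg fun e he => ?_
    rw [real_inner_smul_right, hρ1 e he, mul_one]
    exact Nat.cast_nonneg _
  have hcθ : ⟪cw α, θ⟫ = (m α : ℝ) := by
    rw [hm]; exact hcoef (fun e => (m e : ℝ)) α hα
  have hcwδ0 : ∀ δ ∈ Δ, δ ≠ α → ⟪cw α, δ⟫ = 0 := by
    intro δ hδ hne
    rw [hcw α hα δ hδ, if_neg (fun h => hne h.symm)]
  have hcwαα : ⟪cw α, α⟫ = 1 := by rw [hcw α hα α hα, if_pos rfl]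
  have hcbound : ∀ γ ∈ Φ, ⟪cw α, γ⟫ ≤ (m α : ℝ) := by
    intro γ hγ
    have h1 := hccoef _ (hhigh γ hγ) α hα
    rw [inner_sub_right] at h1
    linarith [hcθ]
  -- reflections
  have hsref : ∀ a ∈ Φ, ∀ x : E, sref a x = x - (2 * ⟪a, x⟫ / ⟪a, a⟫) • a := fun a ha x =>
    sref_apply_aux a x (hne0 (hmemΦ ha))
  have hsmem : ∀ a ∈ Φ, ∀ x ∈ Φ, sref a x ∈ Φ := by
    intro a ha x hx
    rw [hsref a ha x]
    exact Finset.mem_coe.mp (hΦ.reflection_mem a (hmemΦ ha) x (hmemΦ hx))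
  set B : Set E := (↑Δ : Set E) \ {α} with hBdef
  have hBΔ : ∀ {δ : E}, δ ∈ B → δ ∈ Δ ∧ δ ≠ α := by
    intro δ hδ
    exact ⟨Finset.mem_coe.mp hδ.1, hδ.2⟩
  have hBmem : ∀ {δ : E}, δ ∈ Δ → δ ≠ α → δ ∈ B := by
    intro δ hδ hδα
    exact ⟨Finset.mem_coe.mpr hδ, fun h => hδα h⟩
  -- invariance under the parabolic subgroup
  have hQ : ∀ w ∈ reflSubgroup B,
      ((∀ x ∈ Φ, w x ∈ Φ) ∧ ∀ x : E, ⟪cw α, w x⟫ = ⟪cw α, x⟫) ∧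
      ((∀ x ∈ Φ, w⁻¹ x ∈ Φ) ∧ ∀ x : E, ⟪cw α, w⁻¹ x⟫ = ⟪cw α, x⟫) := by
    intro w hw
    induction hw using Subgroup.closure_induction with
    | mem s hs =>
      obtain ⟨a, haB, rfl⟩ := hs
      obtain ⟨haΔ, haα⟩ := hBΔ haB
      have haΦ : a ∈ Φ := Finset.mem_coe.mp (hΔΦ' haΔ)
      have hQa : (∀ x ∈ Φ, sref a x ∈ Φ) ∧ ∀ x : E, ⟪cw α, sref a x⟫ = ⟪cw α, x⟫ := by
        refine ⟨hsmem a haΦ, fun x => ?_⟩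
        rw [hsref a haΦ x, inner_sub_right, real_inner_smul_right, hcwδ0 a haΔ haα,
          mul_zero, sub_zero]
      have hinv : (sref a)⁻¹ = sref a := by
        show (sref a).symm = sref a
        rw [sref]
        exact Submodule.reflection_symm
      exact ⟨hQa, by rw [hinv]; exact hQa⟩
    | one =>
      constructor
      · exact ⟨fun x hx => by simpa, fun x => by simp⟩
      · rw [inv_one]; exact ⟨fun x hx => by simpa, fun x => by simp⟩
    | mul u v hu hv ihu ihv =>
      refine ⟨⟨fun x hx => ?_, fun x => ?_⟩, ?_⟩
      · have h1 : (u * v) x = u (v x) := rfl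
        rw [h1]; exact ihu.1.1 _ (ihv.1.1 x hx)
      · have h1 : (u * v) x = u (v x) := rfl
        rw [h1, ihu.1.2, ihv.1.2]
      · rw [mul_inv_rev]
        refine ⟨fun x hx => ?_, fun x => ?_⟩
        · have h1 : (v⁻¹ * u⁻¹) x = v⁻¹ (u⁻¹ x) := rfl
          rw [h1]; exact ihv.2.1 _ (ihu.2.1 x hx)
        · have h1 : (v⁻¹ * u⁻¹) x = v⁻¹ (u⁻¹ x) := rfl
          rw [h1, ihv.2.2, ihu.2.2]
    | inv u hu ihu =>
      exact ⟨ihu.2, by rw [inv_inv]; exact ihu.1⟩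
  -- V membership
  have hVmem : ∀ {y : E}, y ∈ V ↔ y ∈ Φ ∧ ⟪cw α, y⟫ = (m α : ℝ) := by
    intro y
    rw [hV]
    simp [Set.mem_sep_iff]
  have hself : ∀ x : E, x ∈ reflOrbit B x := fun x => ⟨1, one_mem _, by simp⟩
  have horbθ_sub : reflOrbit B θ ⊆ V := by
    rintro y ⟨w, hw, rfl⟩
    exact hVmem.mpr ⟨(hQ w hw).1.1 θ hθ, by rw [(hQ w hw).1.2 θ]; exact hcθ⟩
  -- dominance computations
  have hDOM : ∀ x y : E, (∀ δ ∈ Δ, 0 ≤ ⟪δ, x⟫) →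
      y - x ∈ AddSubmonoid.closure (↑Δ : Set E) → y ≠ x →
      ⟪x, x⟫ < ⟪y, y⟫ ∧ ⟪x, x⟫ ≤ ⟪x, y⟫ := by
    intro x y hdom hcl hne
    obtain ⟨f, hf⟩ := mem_closure_repr Δ hcl
    have hxγ : 0 ≤ ⟪x, y - x⟫ := by
      rw [hf, inner_sum]
      refine Finset.sum_nonneg fun e he => ?_
      rw [real_inner_smul_right]
      refine mul_nonneg (Nat.cast_nonneg _) ?_
      rw [show ⟪x, e⟫ = ⟪e, x⟫ from real_inner_comm e x]
      exact hdom e he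
    have hγγ : 0 < ⟪y - x, y - x⟫ := inner_self_pos_of_ne_zero (sub_ne_zero.mpr hne)
    have hyy : ⟪y, y⟫ = ⟪x, x⟫ + 2 * ⟪x, y - x⟫ + ⟪y - x, y - x⟫ := by
      have h := real_inner_add_add_self x (y - x)
      have hxy : x + (y - x) = y := by abel
      rw [hxy] at h
      exact h
    have hxy2 : ⟪x, y⟫ = ⟪x, x⟫ + ⟪x, y - x⟫ := by
      rw [inner_sub_right]; ring
    exact ⟨by linarith, by linarith⟩
  -- the dominant case
  have hdomcase : ∀ β ∈ Φ, ⟪cw α, β⟫ = (m α : ℝ) → (∀ δ ∈ Δ, δ ≠ α → 0 ≤ ⟪δ, β⟫) →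
      β ∈ reflOrbit B θ ∨ (Φs.Nonempty ∧ ⟪cw α, θs⟫ = (m α : ℝ) ∧ β ∈ reflOrbit B θs) := by
    intro β hβΦ hcβ hd
    have hβΦ' := hmemΦ hβΦ
    have hdom : ∀ δ ∈ Δ, 0 ≤ ⟪δ, β⟫ := by
      intro δ hδ
      by_cases hδα : δ = α
      · subst hδα
        by_contra hneg
        push_neg at hneg
        obtain ⟨k, hk⟩ := hΦ.crystallographic δ (hΔΦ' hδ) β hβΦ'
        have hδδ : 0 < ⟪δ, δ⟫ := inner_self_pos_of_ne_zero (hne0 (hΔΦ' hδ))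
        have hk0 : (k : ℝ) < 0 := by
          rw [← hk]; exact div_neg_of_neg_of_pos (by linarith) hδδ
        have hs : β - (k : ℝ) • δ ∈ Φ := by
          have h := hΦ.reflection_mem δ (hΔΦ' hδ) β hβΦ'
          rw [hk] at h
          exact Finset.mem_coe.mp h
        have hb := hcbound _ hs
        rw [inner_sub_right, real_inner_smul_right, hcwαα, mul_one, hcβ] at hb
        linarith
      · exact hd δ hδ hδα
    by_cases hβθ : β = θ
    · exact Or.inl (by rw [hβθ]; exact hself θ)
    have h1 := hDOM β θ hdom (hhigh β hβΦ) (fun h => hβθ h.symm)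
    have hβΦs : β ∈ Φs := by rw [hΦs]; exact ⟨hβΦ', ne_of_lt h1.1⟩
    have hΦsne : Φs.Nonempty := ⟨β, hβΦs⟩
    obtain ⟨hθsΦs, hθshigh⟩ := hθs hΦsne
    have hθsΦ' : θs ∈ (↑Φ : Set E) ∧ ⟪θs, θs⟫ ≠ ⟪θ, θ⟫ := by rw [hΦs] at hθsΦs; exact hθsΦs
    have hθsΦ : θs ∈ Φ := Finset.mem_coe.mp hθsΦ'.1
    have hθsdom : ∀ δ ∈ Δ, 0 ≤ ⟪δ, θs⟫ := by
      intro δ hδ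
      by_contra hneg
      push_neg at hneg
      obtain ⟨k, hk⟩ := hΦ.crystallographic δ (hΔΦ' hδ) θs hθsΦ'.1
      have hδδ : 0 < ⟪δ, δ⟫ := inner_self_pos_of_ne_zero (hne0 (hΔΦ' hδ))
      have hk0 : (k : ℝ) < 0 := by
        rw [← hk]; exact div_neg_of_neg_of_pos (by linarith) hδδ
      have hk2 : 2 * ⟪δ, θs⟫ = (k : ℝ) * ⟪δ, δ⟫ := by
        field_simp at hk; linarith [hk]
      have hsΦ : θs - (k : ℝ) • δ ∈ (↑Φ : Set E) := by
        have h := hΦ.reflection_mem δ (hΔΦ' hδ) θs hθsΦ'.1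
        rwa [hk] at h
      have hlen : ⟪θs - (k : ℝ) • δ, θs - (k : ℝ) • δ⟫ = ⟪θs, θs⟫ := by
        rw [real_inner_sub_sub_self, real_inner_smul_right, real_inner_smul_left,
          real_inner_smul_right, show ⟪θs, δ⟫ = ⟪δ, θs⟫ from real_inner_comm δ θs]
        linear_combination (-(k : ℝ)) * hk2
      have hsΦs : θs - (k : ℝ) • δ ∈ Φs := by
        rw [hΦs]
        exact ⟨hsΦ, by rw [hlen]; exact hθsΦ'.2⟩
      have hcl := hθshigh _ hsΦs
      have heq : θs - (θs - (k : ℝ) • δ) = (k : ℝ) • δ := by abel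
      rw [heq] at hcl
      have h3 := hccoef _ hcl δ hδ
      have h1' : ⟪cw δ, δ⟫ = 1 := by rw [hcw δ hδ δ hδ, if_pos rfl]
      rw [real_inner_smul_right, h1', mul_one] at h3
      linarith
    by_cases hβθs : β = θs
    · exact Or.inr ⟨hΦsne, by rw [← hβθs]; exact hcβ, by rw [hβθs]; exact hself θs⟩
    exfalso
    have h2 := hDOM β θs hdom (hθshigh β hβΦs) (fun h => hβθs h.symm)
    have h3 := hDOM θs θ hθsdom (hhigh θs hθsΦ) (fun h => hθsΦ'.2 (by rw [h]))
    have t1 := two_lengths hΦ hβΦ' hθsΦ'.1 h2.1 h2.2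
    have t2 := two_lengths hΦ hθsΦ'.1 (hmemΦ hθ) h3.1 h3.2
    have t3 := two_lengths hΦ hβΦ' (hmemΦ hθ) h1.1 h1.2
    have hA : 0 < ⟪β, β⟫ := inner_self_pos_of_ne_zero (hne0 hβΦ')
    linarith [t1.1, t2.1, t3.2]
  -- the descent step
  have hstep : ∀ β ∈ Φ, ⟪cw α, β⟫ = (m α : ℝ) → ∀ δ ∈ Δ, δ ≠ α → ⟪δ, β⟫ < 0 →
      ∃ β', β' ∈ Φ ∧ ⟪cw α, β'⟫ = (m α : ℝ) ∧ ⟪ρ, θ - β'⟫ ≤ ⟪ρ, θ - β⟫ - 1 ∧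
        (∀ x : E, β' ∈ reflOrbit B x → β ∈ reflOrbit B x) := by
    intro β hβΦ hcβ δ hδ hδα hneg
    have hδΦ : δ ∈ Φ := Finset.mem_coe.mp (hΔΦ' hδ)
    obtain ⟨k, hk⟩ := hΦ.crystallographic δ (hΔΦ' hδ) β (hmemΦ hβΦ)
    have hδδ : 0 < ⟪δ, δ⟫ := inner_self_pos_of_ne_zero (hne0 (hΔΦ' hδ))
    have hk0 : (k : ℝ) < 0 := by
      rw [← hk]; exact div_neg_of_neg_of_pos (by linarith) hδδ
    have hk1 : (k : ℝ) ≤ -1 := by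
      have h0 : k < 0 := by exact_mod_cast hk0
      have h1 : k ≤ -1 := by omega
      exact_mod_cast h1
    refine ⟨β - (k : ℝ) • δ, ?_, ?_, ?_, ?_⟩
    · have h := hΦ.reflection_mem δ (hΔΦ' hδ) β (hmemΦ hβΦ)
      rw [hk] at h
      exact Finset.mem_coe.mp h
    · rw [inner_sub_right, real_inner_smul_right, hcwδ0 δ hδ hδα, mul_zero, sub_zero, hcβ]
    · have hsub : θ - (β - (k : ℝ) • δ) = (θ - β) + (k : ℝ) • δ := by abel
      rw [hsub, inner_add_right, real_inner_smul_right, hρ1 δ hδ, mul_one]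
      linarith
    · intro x hx
      obtain ⟨w, hw, hwx⟩ := hx
      have hβ' : β - (k : ℝ) • δ = sref δ β := by rw [hsref δ hδΦ β, hk]
      have hββ : β = sref δ (β - (k : ℝ) • δ) := by
        rw [hβ']
        show β = Submodule.reflection (ℝ ∙ δ)ᗮ (Submodule.reflection (ℝ ∙ δ)ᗮ β)
        exact (Submodule.reflection_reflection _ β).symm
      have hsδW : sref δ ∈ reflSubgroup B :=
        Subgroup.subset_closure ⟨δ, hBmem hδ hδα, rfl⟩
      refine ⟨sref δ * w, mul_mem hsδW hw, ?_⟩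
      rw [hββ, hwx]
      rfl
  -- the main induction
  have hmain : ∀ N : ℕ, ∀ β ∈ Φ, ⟪cw α, β⟫ = (m α : ℝ) → ⟪ρ, θ - β⟫ ≤ (N : ℝ) →
      β ∈ reflOrbit B θ ∨ (Φs.Nonempty ∧ ⟪cw α, θs⟫ = (m α : ℝ) ∧ β ∈ reflOrbit B θs) := by
    intro N
    induction N with
    | zero =>
      intro β hβΦ hcβ hht
      by_cases hd : ∀ δ ∈ Δ, δ ≠ α → 0 ≤ ⟪δ, β⟫
      · exact hdomcase β hβΦ hcβ hd
      · exfalso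
        push_neg at hd
        obtain ⟨δ, hδ, hδα, hneg⟩ := hd
        obtain ⟨β', hβ'Φ, _, hht', _⟩ := hstep β hβΦ hcβ δ hδ hδα hneg
        have h0 := hρnn _ (hhigh β' hβ'Φ)
        norm_num at hht
        linarith
    | succ n ih =>
      intro β hβΦ hcβ hht
      by_cases hd : ∀ δ ∈ Δ, δ ≠ α → 0 ≤ ⟪δ, β⟫
      · exact hdomcase β hβΦ hcβ hd
      · push_neg at hd
        obtain ⟨δ, hδ, hδα, hneg⟩ := hd
        obtain ⟨β', hβ'Φ, hcβ', hht', horb⟩ := hstep β hβΦ hcβ δ hδ hδα hneg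
        have hb : ⟪ρ, θ - β'⟫ ≤ (n : ℝ) := by push_cast at hht ⊢; linarith
        rcases ih β' hβ'Φ hcβ' hb with h | ⟨h1, h2, h3⟩
        · exact Or.inl (horb θ h)
        · exact Or.inr ⟨h1, h2, horb θs h3⟩
  have hall : ∀ y ∈ V, y ∈ reflOrbit B θ ∨
      (Φs.Nonempty ∧ ⟪cw α, θs⟫ = (m α : ℝ) ∧ y ∈ reflOrbit B θs) := by
    intro y hy
    obtain ⟨hyΦ, hyc⟩ := hVmem.mp hy
    exact hmain ⌈⟪ρ, θ - y⟫⌉₊ y hyΦ hyc (Nat.le_ceil _)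
  constructor
  · rintro ⟨hne', hcs⟩
    obtain ⟨hθsΦs, _⟩ := hθs hne'
    have hθsΦ' : θs ∈ (↑Φ : Set E) ∧ ⟪θs, θs⟫ ≠ ⟪θ, θ⟫ := by rw [hΦs] at hθsΦs; exact hθsΦs
    have horbθs_sub : reflOrbit B θs ⊆ V := by
      rintro y ⟨w, hw, rfl⟩
      exact hVmem.mpr ⟨(hQ w hw).1.1 θs (Finset.mem_coe.mp hθsΦ'.1),
        by rw [(hQ w hw).1.2 θs]; exact hcs⟩
    constructor
    · apply Set.Subset.antisymm
      · intro y hy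
        rcases hall y hy with h | ⟨_, _, h⟩
        · exact Or.inl h
        · exact Or.inr h
      · intro y hy
        rcases hy with h | h
        · exact horbθ_sub h
        · exact horbθs_sub h
    · rw [Set.disjoint_left]
      rintro y ⟨w, hw, rfl⟩ ⟨v, hv, hvy⟩
      have e1 : ⟪w θ, w θ⟫ = ⟪θ, θ⟫ := LinearIsometryEquiv.inner_map_map w θ θ
      have e2 : ⟪v θs, v θs⟫ = ⟪θs, θs⟫ := LinearIsometryEquiv.inner_map_map v θs θs
      rw [← hvy] at e2
      exact hθsΦ'.2 (e2.symm.trans e1)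
  · intro hnot
    apply Set.Subset.antisymm
    · intro y hy
      rcases hall y hy with h | ⟨h1, h2, _⟩
      · exact h
      · exact absurd ⟨h1, h2⟩ hnot
    · exact horbθ_sub
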